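/- Let r : S → ℝ and r̄ : S̄ → ℝ be bounded measurable reward functions, let K̄ ≥ 0, and let L_R = ∫ |r(s) − r̄(φ(s))| dξ(s). Assume that (i) for every s ∈ S, d(inl s, inr φ(s)) ≤ (1−γ)|r(s) − r̄(φ(s))| + γ · W_d(κ(inl s), κ(inr φ(s))), and (ii) d(inr x̄, inr ȳ) ≤ K̄ for all x̄, ȳ ∈ S̄. Then ∫ d(inl s, inr φ(s)) dξ(s) ≤ L_R + γ K̄ L_P/(1−γ). -/

import Mathlib

open MeasureTheory ProbabilityTheory

/-- Total variation distance between two measures on `X`: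
the supremum over measurable sets of the absolute difference of their masses. -/
noncomputable def tvDist {X : Type*} [MeasurableSpace X] (μ ν : Measure X) : ℝ :=
  ⨆ A : {A : Set X // MeasurableSet A}, |(μ A.1).toReal - (ν A.1).toReal|

/-- Dual (Kantorovich) Wasserstein distance between two measures with respect to a cost
function `d`: the supremum over bounded measurable `d`-Lipschitz functions of the absolute
difference of their integrals. -/
noncomputable def wassDual {X : Type*} [MeasurableSpace X] (d : X → X → ℝ)
    (μ ν : Measure X) : ℝ :=
  ⨆ f : {f : X → ℝ // Measurable f ∧ (∃ C, ∀ x, |f x| ≤ C) ∧ ∀ x y, |f x - f y| ≤ d x y},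
    |(∫ x, f.1 x ∂μ) - ∫ x, f.1 x ∂ν|

set_option linter.unusedSectionVars false

open scoped ENNReal

section aux
variable {Sb : Type*} [Fintype Sb] [Nonempty Sb] [MeasurableSpace Sb] [DiscreteMeasurableSpace Sb]

lemma integrable_of_bdd {α : Type*} [MeasurableSpace α] {μ : Measure α} [IsFiniteMeasure μ]
    {f : α → ℝ} (hm : Measurable f) {C : ℝ} (hC : ∀ x, |f x| ≤ C) : Integrable f μ :=
  ⟨hm.aestronglyMeasurable, HasFiniteIntegral.of_bounded (C := C) (ae_of_all _ hC)⟩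

lemma tv_term_le_one (μ ν : Measure Sb) [IsProbabilityMeasure μ] [IsProbabilityMeasure ν]
    (A : Set Sb) : |(μ A).toReal - (ν A).toReal| ≤ 1 := by
  have h1 : (μ A).toReal ≤ 1 := by
    simpa using ENNReal.toReal_mono ENNReal.one_ne_top (prob_le_one (μ := μ) (s := A))
  have h2 : (ν A).toReal ≤ 1 := by
    simpa using ENNReal.toReal_mono ENNReal.one_ne_top (prob_le_one (μ := ν) (s := A))
  have h3 : 0 ≤ (μ A).toReal := ENNReal.toReal_nonneg
  have h4 : 0 ≤ (ν A).toReal := ENNReal.toReal_nonneg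
  rw [abs_sub_le_iff]; constructor <;> linarith

lemma tv_bddAbove (μ ν : Measure Sb) [IsProbabilityMeasure μ] [IsProbabilityMeasure ν] :
    BddAbove (Set.range fun A : {A : Set Sb // MeasurableSet A} =>
      |(μ A.1).toReal - (ν A.1).toReal|) := by
  refine ⟨1, ?_⟩
  rintro x ⟨A, rfl⟩
  exact tv_term_le_one μ ν A.1

lemma le_tvDist (μ ν : Measure Sb) [IsProbabilityMeasure μ] [IsProbabilityMeasure ν]
    (A : Set Sb) : |(μ A).toReal - (ν A).toReal| ≤ tvDist μ ν :=
  le_ciSup (tv_bddAbove μ ν) (⟨A, MeasurableSet.of_discrete⟩ : {A : Set Sb // MeasurableSet A})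

lemma tvDist_nonneg (μ ν : Measure Sb) [IsProbabilityMeasure μ] [IsProbabilityMeasure ν] :
    0 ≤ tvDist μ ν := le_trans (abs_nonneg _) (le_tvDist μ ν ∅)

lemma tvDist_le_one (μ ν : Measure Sb) [IsProbabilityMeasure μ] [IsProbabilityMeasure ν] :
    tvDist μ ν ≤ 1 := by
  exact ciSup_le fun A => tv_term_le_one μ ν A.1

lemma measure_coe_finset_toReal (μ : Measure Sb) [IsProbabilityMeasure μ] (t : Finset Sb) :
    (μ (↑t : Set Sb)).toReal = ∑ x ∈ t, (μ {x}).toReal := by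
  classical
  have h : μ (↑t : Set Sb) = ∑ x ∈ t, μ {x} := by
    rw [← measure_biUnion_finset]
    · congr 1; ext x; simp
    · intro x _ y _ hxy
      simp [Function.onFun, Set.disjoint_singleton, hxy]
    · intro x _; exact MeasurableSet.of_discrete
  rw [h, ENNReal.toReal_sum]
  intro x _; exact measure_ne_top μ _

end aux

section aux2
variable {Sb : Type*} [Fintype Sb] [Nonempty Sb] [MeasurableSpace Sb] [DiscreteMeasurableSpace Sb]

lemma sum_abs_le_two_tv (μ ν : Measure Sb) [IsProbabilityMeasure μ] [IsProbabilityMeasure ν] :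
    ∑ x, |(μ {x}).toReal - (ν {x}).toReal| ≤ 2 * tvDist μ ν := by
  classical
  set a : Sb → ℝ := fun x => (μ {x}).toReal with ha
  set b : Sb → ℝ := fun x => (ν {x}).toReal with hb
  set t : Finset Sb := Finset.univ.filter fun x => b x ≤ a x with ht
  have hsum : ∑ x, |a x - b x| =
      (∑ x ∈ t, (a x - b x)) + ∑ x ∈ Finset.univ.filter (fun x => ¬ b x ≤ a x), (b x - a x) := by
    rw [← Finset.sum_filter_add_sum_filter_not Finset.univ (fun x => b x ≤ a x)]
    congr 1
    · exact Finset.sum_congr rfl fun x hx => by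
        rw [abs_of_nonneg (sub_nonneg.2 (Finset.mem_filter.1 hx).2)]
    · exact Finset.sum_congr rfl fun x hx => by
        have := (Finset.mem_filter.1 hx).2
        rw [abs_of_neg (by linarith [lt_of_not_ge this] : a x - b x < 0)]; ring
  have htc : Finset.univ.filter (fun x => ¬ b x ≤ a x) = tᶜ := by
    ext x; simp [ht, Finset.mem_compl]
  have h1 : ∑ x ∈ t, (a x - b x) = (μ (↑t : Set Sb)).toReal - (ν (↑t : Set Sb)).toReal := by
    rw [Finset.sum_sub_distrib, measure_coe_finset_toReal μ t, measure_coe_finset_toReal ν t]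
  have h2 : ∑ x ∈ tᶜ, (b x - a x) = (ν (↑tᶜ : Set Sb)).toReal - (μ (↑tᶜ : Set Sb)).toReal := by
    rw [Finset.sum_sub_distrib, measure_coe_finset_toReal μ tᶜ, measure_coe_finset_toReal ν tᶜ]
  have k1 := le_tvDist μ ν (↑t : Set Sb)
  have k2 := le_tvDist μ ν (↑tᶜ : Set Sb)
  rw [hsum, htc, h1, h2]
  have a1 : (μ (↑t : Set Sb)).toReal - (ν (↑t : Set Sb)).toReal ≤ tvDist μ ν :=
    le_trans (le_abs_self _) k1
  have a2 : (ν (↑tᶜ : Set Sb)).toReal - (μ (↑tᶜ : Set Sb)).toReal ≤ tvDist μ ν :=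
    by rw [abs_sub_comm] at k2; exact le_trans (le_abs_self _) k2
  linarith

lemma tv_integral_bound (μ ν : Measure Sb) [IsProbabilityMeasure μ] [IsProbabilityMeasure ν]
    (h : Sb → ℝ) (K : ℝ) (hosc : ∀ x y, |h x - h y| ≤ K) :
    |(∫ x, h x ∂μ) - ∫ x, h x ∂ν| ≤ K * tvDist μ ν := by
  classical
  set a : Sb → ℝ := fun x => (μ {x}).toReal with ha
  set b : Sb → ℝ := fun x => (ν {x}).toReal with hb
  have hμ : ∫ x, h x ∂μ = ∑ x, a x * h x := by
    rw [integral_fintype]; simp [ha, smul_eq_mul, Measure.real_def]; exact .of_finite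
  have hν : ∫ x, h x ∂ν = ∑ x, b x * h x := by
    rw [integral_fintype]; simp [hb, smul_eq_mul, Measure.real_def]; exact .of_finite
  have hsa : ∑ x, a x = 1 := by
    have := measure_coe_finset_toReal μ Finset.univ
    simpa [ha] using this.symm
  have hsb : ∑ x, b x = 1 := by
    have := measure_coe_finset_toReal ν Finset.univ
    simpa [hb] using this.symm
  set M : ℝ := Finset.univ.sup' Finset.univ_nonempty h with hM
  set m : ℝ := Finset.univ.inf' Finset.univ_nonempty h with hm
  have hMm : M - m ≤ K := by
    obtain ⟨x, _, hx⟩ := Finset.exists_mem_eq_sup' Finset.univ_nonempty h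
    obtain ⟨y, _, hy⟩ := Finset.exists_mem_eq_inf' Finset.univ_nonempty h
    rw [hM, hx, hm, hy]
    calc h x - h y ≤ |h x - h y| := le_abs_self _
    _ ≤ K := hosc x y
  set c : ℝ := (M + m) / 2 with hc
  have hhc : ∀ x, |h x - c| ≤ K / 2 := by
    intro x
    have h1 : h x ≤ M := Finset.le_sup' h (Finset.mem_univ x)
    have h2 : m ≤ h x := Finset.inf'_le h (Finset.mem_univ x)
    rw [abs_le]; constructor <;> [skip; skip] <;> simp [hc] <;> linarith
  have key : (∫ x, h x ∂μ) - ∫ x, h x ∂ν = ∑ x, (h x - c) * (a x - b x) := by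
    rw [hμ, hν]
    have : ∑ x, (h x - c) * (a x - b x)
        = ∑ x, (a x * h x) - ∑ x, (b x * h x) - c * ((∑ x, a x) - ∑ x, b x) := by
      simp only [mul_sub, Finset.mul_sum, ← Finset.sum_sub_distrib]
      exact Finset.sum_congr rfl fun x _ => by ring
    rw [this, hsa, hsb]; ring
  rw [key]
  calc |∑ x, (h x - c) * (a x - b x)| ≤ ∑ x, |(h x - c) * (a x - b x)| :=
        Finset.abs_sum_le_sum_abs _ _
    _ ≤ ∑ x, (K / 2) * |a x - b x| := by
        refine Finset.sum_le_sum fun x _ => ?_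
        rw [abs_mul]
        exact mul_le_mul_of_nonneg_right (hhc x) (abs_nonneg _)
    _ = (K / 2) * ∑ x, |a x - b x| := by rw [Finset.mul_sum]
    _ ≤ (K / 2) * (2 * tvDist μ ν) := by
        have hK0 : 0 ≤ K := le_trans (abs_nonneg _) (hosc (Classical.arbitrary Sb) (Classical.arbitrary Sb))
        exact mul_le_mul_of_nonneg_left (sum_abs_le_two_tv μ ν) (by linarith)
    _ = K * tvDist μ ν := by ring

end aux2


section aux3
variable {S : Type*} [MeasurableSpace S]
variable {Sb : Type*} [Fintype Sb] [Nonempty Sb] [MeasurableSpace Sb] [DiscreteMeasurableSpace Sb]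

lemma wass_bound (d : (S ⊕ Sb) → (S ⊕ Sb) → ℝ)
    (hdmeas : Measurable (Function.uncurry d))
    (hd01 : ∀ x y, d x y ∈ Set.Icc (0 : ℝ) 1)
    (φ : S → Sb) (hφ : Measurable φ)
    (μ : Measure S) [IsProbabilityMeasure μ] (ν : Measure Sb) [IsProbabilityMeasure ν]
    (Kb : ℝ) (hdK : ∀ x y : Sb, d (Sum.inr x) (Sum.inr y) ≤ Kb) :
    wassDual d (μ.map Sum.inl) (ν.map Sum.inr) ≤
      (∫ s, d (Sum.inl s) (Sum.inr (φ s)) ∂μ) + Kb * tvDist (μ.map φ) ν := by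
  haveI : IsProbabilityMeasure (μ.map φ) := Measure.isProbabilityMeasure_map hφ.aemeasurable
  haveI hne : Nonempty {f : (S ⊕ Sb) → ℝ // Measurable f ∧ (∃ C, ∀ x, |f x| ≤ C) ∧
      ∀ x y, |f x - f y| ≤ d x y} :=
    ⟨⟨fun _ => 0, measurable_const, ⟨0, fun x => by simp⟩,
      fun x y => by simpa using (hd01 x y).1⟩⟩
  refine ciSup_le fun f => ?_
  obtain ⟨f, hfm, ⟨C, hC⟩, hlip⟩ := f
  simp only
  have hgmeas : Measurable fun s : S => d (Sum.inl s) (Sum.inr (φ s)) :=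
    hdmeas.comp (measurable_inl.prodMk (measurable_inr.comp hφ))
  have hmap1 : ∫ x, f x ∂(μ.map Sum.inl) = ∫ s, f (Sum.inl s) ∂μ :=
    integral_map measurable_inl.aemeasurable hfm.aestronglyMeasurable
  have hmap2 : ∫ x, f x ∂(ν.map Sum.inr) = ∫ x, f (Sum.inr x) ∂ν :=
    integral_map measurable_inr.aemeasurable hfm.aestronglyMeasurable
  have hmap3 : ∫ s, f (Sum.inr (φ s)) ∂μ = ∫ x, f (Sum.inr x) ∂(μ.map φ) :=
    (integral_map hφ.aemeasurable (hfm.comp measurable_inr).aestronglyMeasurable).symm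
  have hint1 : Integrable (fun s => f (Sum.inl s)) μ :=
    integrable_of_bdd (hfm.comp measurable_inl) (fun s => hC _)
  have hint2 : Integrable (fun s => f (Sum.inr (φ s))) μ :=
    integrable_of_bdd ((hfm.comp measurable_inr).comp hφ) (fun s => hC _)
  have step1 : |(∫ s, f (Sum.inl s) ∂μ) - ∫ s, f (Sum.inr (φ s)) ∂μ| ≤
      ∫ s, d (Sum.inl s) (Sum.inr (φ s)) ∂μ := by
    rw [← integral_sub hint1 hint2]
    calc |∫ s, (f (Sum.inl s) - f (Sum.inr (φ s))) ∂μ|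
        ≤ ∫ s, |f (Sum.inl s) - f (Sum.inr (φ s))| ∂μ := by
          simpa [Real.norm_eq_abs] using
            norm_integral_le_integral_norm (fun s => f (Sum.inl s) - f (Sum.inr (φ s))) (μ := μ)
      _ ≤ ∫ s, d (Sum.inl s) (Sum.inr (φ s)) ∂μ := by
          refine integral_mono ((hint1.sub hint2).abs) ?_ fun s => hlip _ _
          exact integrable_of_bdd hgmeas (fun s => by
            rw [abs_of_nonneg (hd01 _ _).1]; exact (hd01 _ _).2)
  have step2 : |(∫ x, f (Sum.inr x) ∂(μ.map φ)) - ∫ x, f (Sum.inr x) ∂ν| ≤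
      Kb * tvDist (μ.map φ) ν :=
    tv_integral_bound (μ.map φ) ν (fun x => f (Sum.inr x)) Kb
      (fun x y => le_trans (hlip _ _) (hdK x y))
  rw [hmap1, hmap2]
  have htr : |(∫ s, f (Sum.inl s) ∂μ) - ∫ x, f (Sum.inr x) ∂ν| ≤
      |(∫ s, f (Sum.inl s) ∂μ) - ∫ s, f (Sum.inr (φ s)) ∂μ| +
        |(∫ s, f (Sum.inr (φ s)) ∂μ) - ∫ x, f (Sum.inr x) ∂ν| := abs_sub_le _ _ _
  rw [← hmap3] at step2
  exact htr.trans (add_le_add step1 step2)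

end aux3

/-- Bisimulation bound for the reward-based bisimulation pseudometric: if the pseudometric `d`
on the disjoint union of the ground and latent state spaces satisfies the reward fixed-point
inequality at pairs `(s, φ(s))` and is bounded by `K̄` on the latent part, then the expected
distance between a state and its embedding under the stationary distribution `ξ` is at most
`L_R + γ·K̄·L_P/(1-γ)`. -/
theorem bisimulation_bound_rewards
    {S : Type*} [MeasurableSpace S]
    {Sb : Type*} [Fintype Sb] [Nonempty Sb] [MeasurableSpace Sb] [DiscreteMeasurableSpace Sb]
    (P : Kernel S S) [IsMarkovKernel P]
    (Pb : Sb → PMF Sb)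
    (φ : S → Sb) (hφ : Measurable φ)
    (ξ : Measure S) [IsProbabilityMeasure ξ]
    (hinv : ∀ A : Set S, MeasurableSet A → ξ A = ∫⁻ s, P s A ∂ξ)
    (γ : ℝ) (hγ0 : 0 ≤ γ) (hγ1 : γ < 1)
    (d : (S ⊕ Sb) → (S ⊕ Sb) → ℝ)
    (hdmeas : Measurable (Function.uncurry d))
    (hd01 : ∀ x y, d x y ∈ Set.Icc (0 : ℝ) 1)
    (hdrefl : ∀ x, d x x = 0)
    (hdsymm : ∀ x y, d x y = d y x)
    (hdtri : ∀ x y z, d x z ≤ d x y + d y z)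
    (r : S → ℝ) (hrmeas : Measurable r) (hrbdd : ∃ C, ∀ s, |r s| ≤ C)
    (rb : Sb → ℝ)
    (Kb : ℝ) (hKb : 0 ≤ Kb)
    (hfix : ∀ s : S,
      d (Sum.inl s) (Sum.inr (φ s)) ≤
        (1 - γ) * |r s - rb (φ s)| +
          γ * wassDual d (((P s).map Sum.inl : Measure (S ⊕ Sb)))
            (((Pb (φ s)).toMeasure.map Sum.inr : Measure (S ⊕ Sb))))
    (hdK : ∀ x y : Sb, d (Sum.inr x) (Sum.inr y) ≤ Kb) :
    ∫ s, d (Sum.inl s) (Sum.inr (φ s)) ∂ξ ≤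
      (∫ s, |r s - rb (φ s)| ∂ξ) +
        γ * Kb * (∫ s, tvDist ((P s).map φ) ((Pb (φ s)).toMeasure) ∂ξ) / (1 - γ) := by
  classical
  have h1γ : 0 < 1 - γ := by linarith
  set g : S → ℝ := fun s => d (Sum.inl s) (Sum.inr (φ s)) with hgdef
  have hgmeas : Measurable g := hdmeas.comp (measurable_inl.prodMk (measurable_inr.comp hφ))
  have hg0 : ∀ s, 0 ≤ g s := fun s => (hd01 _ _).1
  have hg1 : ∀ s, g s ≤ 1 := fun s => (hd01 _ _).2
  have hgabs : ∀ s, |g s| ≤ 1 := fun s => by rw [abs_of_nonneg (hg0 s)]; exact hg1 s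
  set T : S → ℝ := fun s => tvDist ((P s).map φ) ((Pb (φ s)).toMeasure) with hTdef
  haveI hPmap : ∀ s, IsProbabilityMeasure ((P s).map φ) := fun s =>
    Measure.isProbabilityMeasure_map hφ.aemeasurable
  have hT0 : ∀ s, 0 ≤ T s := fun s => tvDist_nonneg _ _
  have hT1 : ∀ s, T s ≤ 1 := fun s => tvDist_le_one _ _
  have hTabs : ∀ s, |T s| ≤ 1 := fun s => by rw [abs_of_nonneg (hT0 s)]; exact hT1 s
  have hTmeas : Measurable T := by
    haveI : Fintype {A : Set Sb // MeasurableSet A} := Fintype.ofFinite _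
    haveI : Nonempty {A : Set Sb // MeasurableSet A} := ⟨⟨∅, MeasurableSet.empty⟩⟩
    have hne : (Finset.univ : Finset {A : Set Sb // MeasurableSet A}).Nonempty :=
      Finset.univ_nonempty
    have hu : ∀ A : {A : Set Sb // MeasurableSet A}, Measurable fun s =>
        |(((P s).map φ) A.1).toReal - ((Pb (φ s)).toMeasure A.1).toReal| := by
      intro A
      have h1 : Measurable fun s => (((P s).map φ) A.1).toReal := by
        have heq : ∀ s : S, ((P s).map φ) A.1 = P s (φ ⁻¹' A.1) := fun s =>
          Measure.map_apply hφ A.2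
        simp_rw [heq]
        exact (P.measurable_coe (hφ A.2)).ennreal_toReal
      have h2 : Measurable fun s => ((Pb (φ s)).toMeasure A.1).toReal :=
        (Measurable.of_discrete (f := fun x : Sb => ((Pb x).toMeasure A.1).toReal)).comp hφ
      exact (h1.sub h2).abs
    have hT' : T = Finset.univ.sup' hne (fun A s =>
        |(((P s).map φ) A.1).toReal - ((Pb (φ s)).toMeasure A.1).toReal|) := by
      funext s
      rw [Finset.sup'_apply]
      exact (Finset.sup'_univ_eq_ciSup _).symm
    rw [hT']
    exact Finset.measurable_sup' hne (fun A _ => hu A)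
  set G : S → ℝ≥0∞ := fun s => ENNReal.ofReal (g s) with hGdef
  have hGmeas : Measurable G := hgmeas.ennreal_ofReal
  have hFle : ∀ (μ : Measure S) [IsProbabilityMeasure μ], ∫⁻ s', G s' ∂μ ≤ 1 := by
    intro μ _
    calc ∫⁻ s', G s' ∂μ ≤ ∫⁻ _, 1 ∂μ :=
          lintegral_mono fun s' => ENNReal.ofReal_le_one.2 (hg1 s')
      _ = 1 := by simp
  have hFr_eq : ∀ (μ : Measure S), ∫ s', g s' ∂μ = (∫⁻ s', G s' ∂μ).toReal := fun μ =>
    integral_eq_lintegral_of_nonneg_ae (ae_of_all _ hg0) hgmeas.aestronglyMeasurable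
  set Fr : S → ℝ := fun s => ∫ s', g s' ∂(P s) with hFrdef
  have hFrtoReal : Fr = fun s => (∫⁻ s', G s' ∂(P s)).toReal := funext fun s => hFr_eq _
  have hFmeas : Measurable fun s => ∫⁻ s', G s' ∂(P s) :=
    Measurable.lintegral_kernel_prod_right' (κ := P) (hGmeas.comp measurable_snd)
  have hFrmeas : Measurable Fr := by rw [hFrtoReal]; exact hFmeas.ennreal_toReal
  have hFr0 : ∀ s, 0 ≤ Fr s := fun s => by
    rw [hFrtoReal]; exact ENNReal.toReal_nonneg
  have hFr1 : ∀ s, Fr s ≤ 1 := fun s => by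
    rw [hFrtoReal]
    have := ENNReal.toReal_mono ENNReal.one_ne_top (hFle (P s))
    simpa using this
  have hpt : ∀ s, g s ≤ (1 - γ) * |r s - rb (φ s)| + γ * (Fr s + Kb * T s) := by
    intro s
    refine (hfix s).trans ?_
    refine add_le_add_right (mul_le_mul_of_nonneg_left ?_ hγ0) _
    exact wass_bound d hdmeas hd01 φ hφ (P s) ((Pb (φ s)).toMeasure) Kb hdK
  obtain ⟨C, hC⟩ := hrbdd
  have hrbmeas : Measurable rb := Measurable.of_discrete
  set M : ℝ := Finset.univ.sup' Finset.univ_nonempty (fun x => |rb x|) with hMdef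
  have hM : ∀ x, |rb x| ≤ M := fun x => by
    rw [hMdef]; exact Finset.le_sup' (fun x => |rb x|) (Finset.mem_univ x)
  have hqmeas : Measurable fun s => |r s - rb (φ s)| := (hrmeas.sub (hrbmeas.comp hφ)).abs
  have hqbdd : ∀ s, ‖|r s - rb (φ s)|‖ ≤ C + M := fun s => by
    rw [Real.norm_eq_abs, abs_abs]
    calc |r s - rb (φ s)| ≤ |r s| + |rb (φ s)| := abs_sub _ _
      _ ≤ C + M := add_le_add (hC s) (hM _)
  have hiq : Integrable (fun s => |r s - rb (φ s)|) ξ :=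
    integrable_of_bdd hqmeas (fun s => by simpa [Real.norm_eq_abs] using hqbdd s)
  have hig : Integrable g ξ := integrable_of_bdd hgmeas hgabs
  have hiFr : Integrable Fr ξ :=
    integrable_of_bdd hFrmeas (fun s => by rw [abs_of_nonneg (hFr0 s)]; exact hFr1 s)
  have hiT : Integrable T ξ := integrable_of_bdd hTmeas hTabs
  have hiKT : Integrable (fun s => Kb * T s) ξ := hiT.const_mul Kb
  have hiFKT : Integrable (fun s => Fr s + Kb * T s) ξ := hiFr.add hiKT
  have hiR1 : Integrable (fun s => (1 - γ) * |r s - rb (φ s)|) ξ := hiq.const_mul _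
  have hiR2 : Integrable (fun s => γ * (Fr s + Kb * T s)) ξ := hiFKT.const_mul γ
  have hmono : ∫ s, g s ∂ξ ≤
      ∫ s, ((1 - γ) * |r s - rb (φ s)| + γ * (Fr s + Kb * T s)) ∂ξ :=
    integral_mono hig (hiR1.add hiR2) hpt
  have hsplit : ∫ s, ((1 - γ) * |r s - rb (φ s)| + γ * (Fr s + Kb * T s)) ∂ξ
      = (1 - γ) * (∫ s, |r s - rb (φ s)| ∂ξ) + γ * ((∫ s, Fr s ∂ξ) + Kb * ∫ s, T s ∂ξ) := by
    rw [integral_add hiR1 hiR2, integral_const_mul, integral_const_mul,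
      integral_add hiFr hiKT, integral_const_mul]
  have hbind : ξ.bind (fun s => P s) = ξ := by
    refine Measure.ext fun A hA => ?_
    rw [Measure.bind_apply hA P.measurable.aemeasurable]
    exact (hinv A hA).symm
  have hFrint : ∫ s, Fr s ∂ξ = ∫ s, g s ∂ξ := by
    have h1 : ∫ s, Fr s ∂ξ = (∫⁻ s, ∫⁻ s', G s' ∂(P s) ∂ξ).toReal := by
      rw [hFrtoReal]
      refine integral_toReal hFmeas.aemeasurable (ae_of_all _ fun s => ?_)
      exact lt_of_le_of_lt (hFle (P s)) ENNReal.one_lt_top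
    have h2 : ∫⁻ s, ∫⁻ s', G s' ∂(P s) ∂ξ = ∫⁻ s, G s ∂ξ := by
      rw [← Measure.lintegral_bind P.measurable.aemeasurable hGmeas.aemeasurable, hbind]
    rw [h1, h2, hFr_eq ξ]
  rw [hFrint] at hsplit
  rw [hsplit] at hmono
  set D := ∫ s, g s ∂ξ with hD
  set Q := ∫ s, |r s - rb (φ s)| ∂ξ with hQ
  set TT := ∫ s, T s ∂ξ with hTT
  have hTT0 : 0 ≤ TT := by rw [hTT]; exact integral_nonneg hT0
  have hkey : (D - Q) * (1 - γ) ≤ γ * Kb * TT := by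
    have e : (D - Q) * (1 - γ) = D - γ * D - Q + γ * Q := by ring
    rw [e]; linarith [hmono]
  have hfin : D - Q ≤ γ * Kb * TT / (1 - γ) := (le_div_iff₀ h1γ).2 hkey
  linarith
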